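/- If A : ℝ → SL(3,ℝ) is a C² solution of A''(t) = Λ(A(t),A'(t))(A(t)⁻¹)ᵀ with Λ(A,A') = tr((A'A⁻¹)²)/tr(A⁻ᵀA⁻¹), then the kinetic energy E_K(t) = (1/2) tr(A'(t)A'(t)ᵀ) is constant in t. -/

import Mathlib

open Matrix Filter Topology
noncomputable section
attribute [local instance] Matrix.normedAddCommGroup Matrix.normedSpace

abbrev M3 := Matrix (Fin 3) (Fin 3) ℝ

/-- The coefficient Λ(A,A') = tr((A'A⁻¹)²)/tr(A⁻ᵀA⁻¹) for incompressible affine motion. -/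
def Lam (A A' : M3) : ℝ :=
  Matrix.trace ((A' * A⁻¹) * (A' * A⁻¹)) / Matrix.trace ((A⁻¹)ᵀ * A⁻¹)

lemma entry_hasDerivAt {F : ℝ → M3} {D : M3} {t : ℝ} (h : HasDerivAt F D t)
    (i j : Fin 3) : HasDerivAt (fun s => F s i j) (D i j) t := by
  exact hasDerivAt_pi.mp (hasDerivAt_pi.mp h i) j

lemma hasDerivAt_det_fin_three (F : ℝ → M3) (D : M3) (t : ℝ)
    (h : HasDerivAt F D t) :
    HasDerivAt (fun s => (F s).det) (Matrix.trace (D * (F t).adjugate)) t := by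
  have h' := fun i j => entry_hasDerivAt h i j
  have hfun : (fun s => (F s).det) = fun s =>
      F s 0 0 * F s 1 1 * F s 2 2 - F s 0 0 * F s 1 2 * F s 2 1
      - F s 0 1 * F s 1 0 * F s 2 2 + F s 0 1 * F s 1 2 * F s 2 0
      + F s 0 2 * F s 1 0 * F s 2 1 - F s 0 2 * F s 1 1 * F s 2 0 :=
    funext fun s => Matrix.det_fin_three (F s)
  rw [hfun]
  have H := HasDerivAt.sub (HasDerivAt.add (HasDerivAt.add (HasDerivAt.sub (HasDerivAt.sub
      (((h' 0 0).mul (h' 1 1)).mul (h' 2 2))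
      (((h' 0 0).mul (h' 1 2)).mul (h' 2 1)))
      (((h' 0 1).mul (h' 1 0)).mul (h' 2 2)))
      (((h' 0 1).mul (h' 1 2)).mul (h' 2 0)))
      (((h' 0 2).mul (h' 1 0)).mul (h' 2 1)))
      (((h' 0 2).mul (h' 1 1)).mul (h' 2 0))
  convert H using 1
  · rfl
  · rfl
  · rfl
  simp [Matrix.adjugate_fin_three, Matrix.trace_fin_three, Matrix.mul_apply,
    Fin.sum_univ_three]
  ring

lemma hasDerivAt_energy (F : ℝ → M3) (D : M3) (t : ℝ)
    (h : HasDerivAt F D t) :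
    HasDerivAt (fun s => (1/2 : ℝ) * Matrix.trace (F s * (F s)ᵀ))
      (Matrix.trace (D * (F t)ᵀ)) t := by
  have h' := fun i j => entry_hasDerivAt h i j
  have key : ∀ i j : Fin 3, HasDerivAt (fun s => F s i j * F s i j)
      (D i j * F t i j + F t i j * D i j) t := fun i j => (h' i j).mul (h' i j)
  have H : HasDerivAt (fun s => Matrix.trace (F s * (F s)ᵀ))
      (∑ i : Fin 3, ∑ j : Fin 3, (D i j * F t i j + F t i j * D i j)) t := by
    have hr : (fun s => Matrix.trace (F s * (F s)ᵀ))
        = fun s => ∑ i : Fin 3, ∑ j : Fin 3, F s i j * F s i j := by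
      funext s
      simp [Matrix.trace, Matrix.mul_apply, Matrix.diag, Matrix.transpose_apply]
    rw [hr]
    exact HasDerivAt.fun_sum fun i _ => HasDerivAt.fun_sum fun j _ => key i j
  have := H.const_mul (1/2 : ℝ)
  convert this using 1
  · rfl
  · rfl
  simp [Matrix.trace, Matrix.mul_apply, Matrix.diag, Matrix.transpose_apply,
    Finset.mul_sum, Fin.sum_univ_three]
  ring

/-- conservation of kinetic energy for incompressible affine motion. -/
theorem stmt8 (A : ℝ → M3)
    (hA : ContDiff ℝ 2 A)
    (hdet : ∀ t : ℝ, (A t).det = 1)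
    (hODE : ∀ t : ℝ, deriv (deriv A) t = Lam (A t) (deriv A t) • ((A t)⁻¹)ᵀ) :
    ∀ t : ℝ,
      (1/2) * Matrix.trace (deriv A t * (deriv A t)ᵀ)
        = (1/2) * Matrix.trace (deriv A 0 * (deriv A 0)ᵀ) := by
  have hA2 : ContDiff ℝ (1 + 1) A := by norm_num at hA ⊢; exact hA
  have hAd : Differentiable ℝ A := hA.differentiable (by norm_num)
  have hB : ContDiff ℝ 1 (deriv A) := (contDiff_succ_iff_deriv.mp hA2).2.2
  have hBd : Differentiable ℝ (deriv A) := hB.differentiable one_ne_zero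
  -- inverse = adjugate
  have hinv : ∀ t, (A t)⁻¹ = (A t).adjugate := by
    intro t
    rw [Matrix.inv_def, hdet t]
    simp
  -- trace (A' * adjugate A) = 0
  have htr0 : ∀ t, Matrix.trace (deriv A t * (A t).adjugate) = 0 := by
    intro t
    have h1 : HasDerivAt (fun s => (A s).det)
        (Matrix.trace (deriv A t * (A t).adjugate)) t :=
      hasDerivAt_det_fin_three A (deriv A t) t (hAd t).hasDerivAt
    have h2 : HasDerivAt (fun s => (A s).det) 0 t := by
      have : (fun s => (A s).det) = fun _ => (1 : ℝ) := funext hdet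
      rw [this]; exact hasDerivAt_const t 1
    exact h1.unique h2
  -- energy function
  set E : ℝ → ℝ := fun t => (1/2 : ℝ) * Matrix.trace (deriv A t * (deriv A t)ᵀ) with hE
  have hEderiv : ∀ t, HasDerivAt E (Matrix.trace (deriv (deriv A) t * (deriv A t)ᵀ)) t :=
    fun t => hasDerivAt_energy (deriv A) (deriv (deriv A) t) t (hBd t).hasDerivAt
  have hEzero : ∀ t, deriv E t = 0 := by
    intro t
    rw [(hEderiv t).deriv, hODE t]
    rw [Matrix.smul_mul, Matrix.trace_smul]
    have : Matrix.trace (((A t)⁻¹)ᵀ * (deriv A t)ᵀ) = 0 := by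
      rw [← Matrix.transpose_mul, Matrix.trace_transpose, hinv t, htr0 t]
    rw [this, smul_zero]
  have hEdiff : Differentiable ℝ E := fun t => (hEderiv t).differentiableAt
  intro t
  exact is_const_of_deriv_eq_zero hEdiff hEzero t 0
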